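/- Let R be a commutative ring and f : M → N an R-linear map between free R-modules of the same finite rank. If for every maximal ideal 𝔪 of R the induced map f ⊗ R/𝔪 : M/𝔪M → N/𝔪N is injective, then f is an isomorphism. -/

import Mathlib

open scoped TensorProduct
open Matrix

/-- If `f : M → N` is a morphism of free `R`-modules of the same finite rank such that
`f ⊗ R/𝔪` is injective for every maximal ideal `𝔪` of `R`, then `f` is an isomorphism. -/
theorem bijective_of_injective_mod_all_maximal_ideals
    (R : Type*) [CommRing R] (M N : Type*) [AddCommGroup M] [AddCommGroup N]
    [Module R M] [Module R N] (n : ℕ)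
    (bM : Module.Basis (Fin n) R M) (bN : Module.Basis (Fin n) R N)
    (f : M →ₗ[R] N)
    (h : ∀ m : Ideal R, m.IsMaximal →
      Function.Injective (LinearMap.baseChange (R ⧸ m) f)) :
    Function.Bijective f := by
  set A := LinearMap.toMatrix bM bN f with hA
  have hdet : IsUnit A.det := by
    by_contra hnu
    obtain ⟨m, hm, hmem⟩ := exists_max_ideal_of_mem_nonunits hnu
    haveI := hm
    have hinj := h m hm
    set k := R ⧸ m
    set B : Matrix (Fin n) (Fin n) k := A.map (algebraMap R k) with hB
    set bM' := Algebra.TensorProduct.basis k bM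
    set bN' := Algebra.TensorProduct.basis k bN
    -- det B = 0 since det A ∈ m
    have hB0 : B.det = 0 := by
      have h1 : (algebraMap R k) A.det = B.det := RingHom.map_det (algebraMap R k) A
      rw [← h1]
      exact Ideal.Quotient.eq_zero_iff_mem.mpr hmem
    -- toLin of B is the base change of f, hence injective
    have hBf : Matrix.toLin bM' bN' B = LinearMap.baseChange k f := by
      rw [hB, hA, ← LinearMap.toMatrix_baseChange, Matrix.toLin_toMatrix]
    -- hence mulVec by B is injective
    have hinjB : ∀ v : Fin n → k, B *ᵥ v = 0 → v = 0 := by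
      intro v hv
      have hx : Matrix.toLin bM' bN' B (bM'.equivFun.symm v) = 0 := by
        rw [Matrix.toLin_apply]
        have hr : ⇑(bM'.repr (bM'.equivFun.symm v)) = v := by
          simp [Module.Basis.equivFun]
        rw [hr, hv]
        simp
      rw [hBf] at hx
      have : bM'.equivFun.symm v = 0 := by
        apply hinj
        simpa using hx
      have h2 := congrArg bM'.equivFun this
      rw [LinearEquiv.apply_symm_apply] at h2
      simpa using h2
    -- but det B = 0 gives a nonzero kernel vector over the field k
    haveI : Field k := Ideal.Quotient.field m
    obtain ⟨v, hv0, hv⟩ := (Matrix.exists_mulVec_eq_zero_iff).mpr hB0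
    exact hv0 (hinjB v hv)
  have hco := LinearEquiv.coe_ofIsUnitDet hdet
  rw [show f = (LinearEquiv.ofIsUnitDet hdet : M →ₗ[R] N) from hco.symm]
  exact (LinearEquiv.ofIsUnitDet hdet).bijective
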